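/- arXiv:2406.01282 — 2 statements merged into one kernel-verified Lean document; each statement's English description precedes it below -/
import Mathlib

section
/- (Consequence of Proposition 1.) Let κ < 0, let x and y be points of the Poincaré ball of curvature κ with y ≠ x, and let 0 < δ < τ. Define z = exp^κ_x((δ/τ) · log^κ_x(y)). Then dκ(z, y) = (1 − δ/τ) · dκ(x, y). -/
open Real Filter

open scoped RealInnerProductSpace

/-- Inverse hyperbolic tangent. -/
noncomputable def artanh (x : ℝ) : ℝ := (1 / 2) * Real.log ((1 + x) / (1 - x))

variable {E : Type*} [NormedAddCommGroup E] [InnerProductSpace ℝ E]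

/-- Möbius (gyrovector) addition on the Poincaré ball of curvature `κ`. -/
noncomputable def mAdd (κ : ℝ) (x y : E) : E :=
  (1 - 2 * κ * ⟪x, y⟫ + κ ^ 2 * ‖x‖ ^ 2 * ‖y‖ ^ 2)⁻¹ •
    ((1 - 2 * κ * ⟪x, y⟫ - κ * ‖y‖ ^ 2) • x + (1 + κ * ‖x‖ ^ 2) • y)

/-- Conformal factor `λκ(x) = 2 / (1 + κ‖x‖²)`. -/
noncomputable def lam (κ : ℝ) (x : E) : ℝ := 2 / (1 + κ * ‖x‖ ^ 2)

open Classical in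
/-- Möbius scalar multiplication `r ⊗κ x`. -/
noncomputable def mSmul (κ r : ℝ) (x : E) : E :=
  if x = 0 then 0
  else ((1 / Real.sqrt (-κ)) * Real.tanh (r * _root_.artanh (Real.sqrt (-κ) * ‖x‖)) * ‖x‖⁻¹) • x

open Classical in
/-- Exponential map of the Poincaré ball at `x` with curvature `κ`. -/
noncomputable def expMap (κ : ℝ) (x v : E) : E :=
  if v = 0 then x
  else mAdd κ x
    ((Real.tanh (Real.sqrt (-κ) * lam κ x * ‖v‖ / 2) / (Real.sqrt (-κ) * ‖v‖)) • v)

/-- Logarithmic map of the Poincaré ball at `x` with curvature `κ`. -/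
noncomputable def logMap (κ : ℝ) (x y : E) : E :=
  ((2 / (Real.sqrt (-κ) * lam κ x)) * _root_.artanh (Real.sqrt (-κ) * ‖mAdd κ (-x) y‖) *
      ‖mAdd κ (-x) y‖⁻¹) • mAdd κ (-x) y

/-- Geodesic distance of the Poincaré ball of curvature `κ`. -/
noncomputable def dK (κ : ℝ) (x y : E) : ℝ :=
  (2 / Real.sqrt (-κ)) * _root_.artanh (Real.sqrt (-κ) * ‖mAdd κ (-x) y‖)

/-- Membership in the Poincaré ball of curvature `κ`: `κ·‖x‖² > −1`. -/
def inBall (κ : ℝ) (x : E) : Prop := κ * ‖x‖ ^ 2 > -1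

/-! ### Auxiliary scalar lemmas about `tanh` and `artanh` -/

lemma tanh_eq_exp' (x : ℝ) :
    Real.tanh x = (Real.exp (2*x) - 1) / (Real.exp (2*x) + 1) := by
  have h1 : Real.exp x ≠ 0 := (Real.exp_pos x).ne'
  have h2 : Real.exp x + Real.exp (-x) > 0 := by positivity
  have h3 : Real.exp (2*x) = Real.exp x ^ 2 := by
    rw [← Real.exp_nat_mul]; norm_num [mul_comm]
  have h4 : Real.exp (-x) = (Real.exp x)⁻¹ := Real.exp_neg x
  rw [Real.tanh_eq_sinh_div_cosh, Real.sinh_eq, Real.cosh_eq, h3, h4]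
  rw [div_eq_div_iff (by positivity) (by positivity)]
  field_simp

lemma tanh_lt_one' (x : ℝ) : Real.tanh x < 1 := by
  rw [tanh_eq_exp']
  have := Real.exp_pos (2*x)
  rw [div_lt_one (by positivity)]; linarith

lemma neg_one_lt_tanh' (x : ℝ) : -1 < Real.tanh x := by
  rw [tanh_eq_exp']
  have := Real.exp_pos (2*x)
  rw [lt_div_iff₀ (by positivity)]; linarith

lemma tanh_strictMono' : StrictMono Real.tanh := by
  intro a b hab
  rw [tanh_eq_exp', tanh_eq_exp']
  have ha := Real.exp_pos (2*a)
  have hb := Real.exp_pos (2*b)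
  have hlt : Real.exp (2*a) < Real.exp (2*b) := Real.exp_lt_exp.2 (by linarith)
  rw [div_lt_div_iff₀ (by positivity) (by positivity)]
  nlinarith

lemma tanh_pos' {x : ℝ} (hx : 0 < x) : 0 < Real.tanh x := by
  have := tanh_strictMono' hx
  simpa [Real.tanh_zero] using this

lemma artanh_tanh' (x : ℝ) : _root_.artanh (Real.tanh x) = x := by
  have hE := Real.exp_pos (2*x)
  rw [tanh_eq_exp', _root_.artanh]
  have h1 : (1 + (Real.exp (2*x) - 1) / (Real.exp (2*x) + 1)) /
      (1 - (Real.exp (2*x) - 1) / (Real.exp (2*x) + 1)) = Real.exp (2*x) := by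
    field_simp
    ring
  rw [h1, Real.log_exp]; ring

lemma tanh_artanh' {u : ℝ} (h1 : -1 < u) (h2 : u < 1) : Real.tanh (_root_.artanh u) = u := by
  have hR : (0:ℝ) < (1 + u) / (1 - u) := by
    apply div_pos <;> linarith
  have hexp : Real.exp (2 * _root_.artanh u) = (1 + u) / (1 - u) := by
    rw [_root_.artanh]
    rw [show 2 * ((1:ℝ)/2 * Real.log ((1+u)/(1-u))) = Real.log ((1+u)/(1-u)) by ring]
    exact Real.exp_log hR
  have hR1 : (0:ℝ) < (1 + u) / (1 - u) + 1 := by linarith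
  rw [tanh_eq_exp', hexp, div_eq_iff hR1.ne', div_add' _ _ _ (by linarith : (1:ℝ) - u ≠ 0),
    div_sub' (by linarith : (1:ℝ) - u ≠ 0)]
  have hu : (1:ℝ) - u ≠ 0 := by linarith
  field_simp
  ring

lemma artanh_pos' {u : ℝ} (h0 : 0 < u) (h1 : u < 1) : 0 < _root_.artanh u := by
  rw [_root_.artanh]
  have : (1:ℝ) < (1 + u) / (1 - u) := by
    rw [lt_div_iff₀ (by linarith)]; linarith
  have := Real.log_pos this
  linarith

lemma tanh_sub' (x y : ℝ) :
    Real.tanh (x - y) = (Real.tanh x - Real.tanh y) / (1 - Real.tanh x * Real.tanh y) := by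
  have hx1 := tanh_lt_one' x
  have hx2 := neg_one_lt_tanh' x
  have hy1 := tanh_lt_one' y
  have hy2 := neg_one_lt_tanh' y
  have hden : 1 - Real.tanh x * Real.tanh y > 0 := by nlinarith
  have hEx := Real.exp_pos (2*x)
  have hEy := Real.exp_pos (2*y)
  have hxy : Real.exp (2*(x-y)) = Real.exp (2*x) / Real.exp (2*y) := by
    rw [← Real.exp_sub]; ring_nf
  rw [tanh_eq_exp' x, tanh_eq_exp' y] at hden ⊢
  rw [tanh_eq_exp' (x - y), hxy]
  have h1 : rexp (2*x) / rexp (2*y) + 1 > 0 := by positivity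
  rw [div_eq_div_iff h1.ne' hden.ne']
  field_simp
  ring

/-! ### Auxiliary vector lemmas about Möbius addition -/

lemma inner_comb (u v : E) (r s r' s' : ℝ) :
    ⟪r • u + s • v, r' • u + s' • v⟫ =
      r * r' * ‖u‖ ^ 2 + (r * s' + s * r') * ⟪u, v⟫ + s * s' * ‖v‖ ^ 2 := by
  simp only [inner_add_left, inner_add_right, real_inner_smul_left, real_inner_smul_right,
    real_inner_self_eq_norm_sq, real_inner_comm v u]
  ring

lemma norm_comb (u v : E) (r s : ℝ) :
    ‖r • u + s • v‖ ^ 2 = r ^ 2 * ‖u‖ ^ 2 + 2 * r * s * ⟪u, v⟫ + s ^ 2 * ‖v‖ ^ 2 := by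
  rw [← real_inner_self_eq_norm_sq, inner_comb]; ring

lemma inner_xcomb (x y : E) (r s : ℝ) : ⟪x, r • x + s • y⟫ = r * ‖x‖ ^ 2 + s * ⟪x, y⟫ := by
  simp [inner_add_right, real_inner_smul_right, real_inner_self_eq_norm_sq]

lemma mAdd_eq (κ : ℝ) (x v : E) :
    mAdd κ x v =
      ((1 - 2 * κ * ⟪x, v⟫ + κ ^ 2 * ‖x‖ ^ 2 * ‖v‖ ^ 2)⁻¹ *
        (1 - 2 * κ * ⟪x, v⟫ - κ * ‖v‖ ^ 2)) • x +
      ((1 - 2 * κ * ⟪x, v⟫ + κ ^ 2 * ‖x‖ ^ 2 * ‖v‖ ^ 2)⁻¹ * (1 + κ * ‖x‖ ^ 2)) • v := by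
  rw [mAdd, smul_add, smul_smul, smul_smul]

lemma delta_pos (κ : ℝ) (hκ : κ < 0) (u v : E) (hu : 0 < 1 + κ * ‖u‖ ^ 2)
    (hv : 0 < 1 + κ * ‖v‖ ^ 2) :
    0 < 1 - 2 * κ * ⟪u, v⟫ + κ ^ 2 * ‖u‖ ^ 2 * ‖v‖ ^ 2 := by
  have h := norm_add_sq_real u v
  have h2 : (0:ℝ) ≤ ‖u + v‖ ^ 2 := sq_nonneg _
  nlinarith [mul_pos hu hv]

lemma norm_mAdd_sq (κ : ℝ) (x v : E)
    (h : 1 - 2 * κ * ⟪x, v⟫ + κ ^ 2 * ‖x‖ ^ 2 * ‖v‖ ^ 2 ≠ 0) :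
    ‖mAdd κ x v‖ ^ 2 = ‖x + v‖ ^ 2 / (1 - 2 * κ * ⟪x, v⟫ + κ ^ 2 * ‖x‖ ^ 2 * ‖v‖ ^ 2) := by
  rw [mAdd_eq, norm_comb, norm_add_sq_real]
  field_simp
  ring

lemma one_add_norm_mAdd_sq (κ : ℝ) (x v : E)
    (h : 1 - 2 * κ * ⟪x, v⟫ + κ ^ 2 * ‖x‖ ^ 2 * ‖v‖ ^ 2 ≠ 0) :
    1 + κ * ‖mAdd κ x v‖ ^ 2 =
      (1 + κ * ‖x‖ ^ 2) * (1 + κ * ‖v‖ ^ 2) /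
        (1 - 2 * κ * ⟪x, v⟫ + κ ^ 2 * ‖x‖ ^ 2 * ‖v‖ ^ 2) := by
  rw [norm_mAdd_sq κ x v h, norm_add_sq_real, eq_div_iff h, add_mul, mul_div_assoc', div_mul_cancel₀ _ h]
  ring

lemma madd_ball (κ : ℝ) (hκ : κ < 0) (x v : E) (hx : 0 < 1 + κ * ‖x‖ ^ 2)
    (hv : 0 < 1 + κ * ‖v‖ ^ 2) : 0 < 1 + κ * ‖mAdd κ x v‖ ^ 2 := by
  have hΔ := delta_pos κ hκ x v hx hv
  rw [one_add_norm_mAdd_sq κ x v hΔ.ne']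
  exact div_pos (mul_pos hx hv) hΔ

/-! ### Scalar cores -/

set_option maxHeartbeats 1000000 in
lemma lc_scalar (κ a b p D C1 C2 q n Δ2 : ℝ)
    (hD : D = 1 + 2*κ*p + κ^2*a*b) (hDne : D ≠ 0)
    (hC1 : D*C1 = -(1 + 2*κ*p - κ*b)) (hC2 : D*C2 = 1 + κ*a)
    (hq : q = C1*a + C2*p) (hn : n = C1^2*a + 2*C1*C2*p + C2^2*b)
    (hΔ2 : Δ2 = 1 - 2*κ*q + κ^2*a*n) (hΔ2ne : Δ2 ≠ 0) :
    Δ2⁻¹ * (1 - 2*κ*q - κ*n) + Δ2⁻¹ * (1 + κ*a) * C1 = 0 ∧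
      Δ2⁻¹ * (1 + κ*a) * C2 = 1 := by
  have e_q : q*D = (D*C1)*a + (D*C2)*p := by rw [hq]; ring
  rw [hC1, hC2] at e_q
  have e_n : n*D^2 = (D*C1)^2*a + 2*(D*C1)*(D*C2)*p + (D*C2)^2*b := by rw [hn]; ring
  rw [hC1, hC2] at e_n
  have e_c : (1 - 2*κ*q - κ*n)*D^2 + (1 + κ*a)*(D*C1)*D = 0 := by
    rw [hC1]
    have expand : (1 - 2*κ*q - κ*n)*D^2 = D^2 - 2*κ*(q*D)*D - κ*(n*D^2) := by ring
    rw [expand, e_q, e_n]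
    subst hD; ring
  have inner0 : (1 - 2*κ*q - κ*n) + (1 + κ*a)*C1 = 0 := by
    apply mul_right_cancel₀ (pow_ne_zero 2 hDne)
    rw [zero_mul]
    linear_combination e_c
  constructor
  · calc Δ2⁻¹ * (1 - 2*κ*q - κ*n) + Δ2⁻¹ * (1 + κ*a) * C1
        = Δ2⁻¹ * ((1 - 2*κ*q - κ*n) + (1 + κ*a)*C1) := by ring
      _ = 0 := by rw [inner0, mul_zero]
  · have key2 : Δ2 * D^2 = (1 + κ*a)^2 * D := by
      have expand : Δ2*D^2 = D^2 - 2*κ*(q*D)*D + κ^2*a*(n*D^2) := by rw [hΔ2]; ring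
      rw [expand, e_q, e_n]
      subst hD; ring
    have key2' : Δ2 * D = (1 + κ*a)^2 := by
      apply mul_right_cancel₀ hDne
      linear_combination key2
    rw [inv_mul_eq_div, div_mul_eq_mul_div, div_eq_one_iff_eq hΔ2ne]
    apply mul_right_cancel₀ hDne
    linear_combination (1 + κ*a)*hC2 - key2'

set_option maxHeartbeats 4000000 in
lemma key_scalar (κ a P B g Δ1 Δ2 A1 B1 A2 B2 ip n1 n2 dd Δo : ℝ)
    (hΔ1 : Δ1 = 1 - 2*κ*(g*P) + κ^2*a*(g^2*B)) (h1ne : Δ1 ≠ 0)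
    (hΔ2 : Δ2 = 1 - 2*κ*P + κ^2*a*B) (h2ne : Δ2 ≠ 0)
    (hA1 : Δ1*A1 = 1 - 2*κ*(g*P) - κ*(g^2*B)) (hB1 : Δ1*B1 = (1 + κ*a)*g)
    (hA2 : Δ2*A2 = 1 - 2*κ*P - κ*B) (hB2 : Δ2*B2 = 1 + κ*a)
    (hip : ip = A1*A2*a + (A1*B2 + B1*A2)*P + B1*B2*B)
    (hn1 : n1 = A1^2*a + 2*A1*B1*P + B1^2*B)
    (hn2 : n2 = A2^2*a + 2*A2*B2*P + B2^2*B)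
    (hdd : dd = (A2-A1)^2*a + 2*(A2-A1)*(B2-B1)*P + (B2-B1)^2*B)
    (hΔo : Δo = 1 + 2*κ*ip + κ^2*(n1*n2)) (hone : Δo ≠ 0)
    (hgB : 1 + κ*g*B ≠ 0) :
    dd / Δo = (1-g)^2*B / (1+κ*g*B)^2 := by
  have e_dd : dd*(Δ1^2*Δ2^2) =
      ((Δ2*A2)*Δ1 - (Δ1*A1)*Δ2)^2*a + 2*((Δ2*A2)*Δ1 - (Δ1*A1)*Δ2)*((Δ2*B2)*Δ1 - (Δ1*B1)*Δ2)*P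
        + ((Δ2*B2)*Δ1 - (Δ1*B1)*Δ2)^2*B := by
    rw [hdd]; ring
  rw [hA1, hB1, hA2, hB2] at e_dd
  have e_ip : ip*(Δ1*Δ2) =
      (Δ1*A1)*(Δ2*A2)*a + ((Δ1*A1)*(Δ2*B2) + (Δ1*B1)*(Δ2*A2))*P + (Δ1*B1)*(Δ2*B2)*B := by
    rw [hip]; ring
  rw [hA1, hB1, hA2, hB2] at e_ip
  have e_n1 : n1*Δ1^2 = (Δ1*A1)^2*a + 2*(Δ1*A1)*(Δ1*B1)*P + (Δ1*B1)^2*B := by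
    rw [hn1]; ring
  rw [hA1, hB1] at e_n1
  have e_n2 : n2*Δ2^2 = (Δ2*A2)^2*a + 2*(Δ2*A2)*(Δ2*B2)*P + (Δ2*B2)^2*B := by
    rw [hn2]; ring
  rw [hA2, hB2] at e_n2
  have e_do : Δo*(Δ1^2*Δ2^2) =
      Δ1^2*Δ2^2 + 2*κ*(ip*(Δ1*Δ2))*(Δ1*Δ2) + κ^2*((n1*Δ1^2)*(n2*Δ2^2)) := by
    rw [hΔo]; ring
  rw [e_ip, e_n1, e_n2] at e_do
  rw [div_eq_div_iff hone (pow_ne_zero 2 hgB)]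
  apply mul_right_cancel₀ (mul_ne_zero (pow_ne_zero 2 h1ne) (pow_ne_zero 2 h2ne))
  subst hΔ1; subst hΔ2
  linear_combination (1 + κ*g*B)^2 * e_dd - (1-g)^2*B*e_do

/-! ### Left cancellation and the key invariance computation -/

lemma left_cancel (κ : ℝ) (hκ : κ < 0) (x y : E) (hx : 0 < 1 + κ * ‖x‖ ^ 2)
    (hy : 0 < 1 + κ * ‖y‖ ^ 2) : mAdd κ x (mAdd κ (-x) y) = y := by
  have hxn : 0 < 1 + κ * ‖(-x : E)‖ ^ 2 := by rwa [norm_neg]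
  have hΔ1pos := delta_pos κ hκ (-x) y hxn hy
  rw [inner_neg_left, norm_neg] at hΔ1pos
  have hDpos : 0 < 1 + 2 * κ * ⟪x, y⟫ + κ ^ 2 * ‖x‖ ^ 2 * ‖y‖ ^ 2 := by
    rw [show 1 - 2 * κ * -⟪x, y⟫ + κ ^ 2 * ‖x‖ ^ 2 * ‖y‖ ^ 2
        = 1 + 2 * κ * ⟪x, y⟫ + κ ^ 2 * ‖x‖ ^ 2 * ‖y‖ ^ 2 by ring] at hΔ1pos
    exact hΔ1pos
  have hwb := madd_ball κ hκ (-x) y hxn hy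
  have hΔ2pos := delta_pos κ hκ x (mAdd κ (-x) y) hx hwb
  have hw' : mAdd κ (-x) y =
      (-((1 + 2 * κ * ⟪x, y⟫ + κ ^ 2 * ‖x‖ ^ 2 * ‖y‖ ^ 2)⁻¹ *
        (1 + 2 * κ * ⟪x, y⟫ - κ * ‖y‖ ^ 2))) • x +
      ((1 + 2 * κ * ⟪x, y⟫ + κ ^ 2 * ‖x‖ ^ 2 * ‖y‖ ^ 2)⁻¹ * (1 + κ * ‖x‖ ^ 2)) • y := by
    rw [mAdd_eq]
    simp only [inner_neg_left, norm_neg, smul_neg, neg_smul]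
    match_scalars <;> ring
  set D : ℝ := 1 + 2 * κ * ⟪x, y⟫ + κ ^ 2 * ‖x‖ ^ 2 * ‖y‖ ^ 2 with hDdef
  set C1 : ℝ := -(D⁻¹ * (1 + 2 * κ * ⟪x, y⟫ - κ * ‖y‖ ^ 2)) with hC1def
  set C2 : ℝ := D⁻¹ * (1 + κ * ‖x‖ ^ 2) with hC2def
  rw [hw', inner_xcomb, norm_comb] at hΔ2pos
  rw [mAdd_eq κ x (mAdd κ (-x) y), hw', inner_xcomb, norm_comb]
  have hC1' : D * C1 = -(1 + 2 * κ * ⟪x, y⟫ - κ * ‖y‖ ^ 2) := by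
    rw [hC1def]; field_simp
  have hC2' : D * C2 = 1 + κ * ‖x‖ ^ 2 := by
    rw [hC2def]; field_simp
  obtain ⟨h0, h1⟩ := lc_scalar κ (‖x‖ ^ 2) (‖y‖ ^ 2) ⟪x, y⟫ D C1 C2 _ _ _ hDdef hDpos.ne'
    hC1' hC2' rfl rfl rfl hΔ2pos.ne'
  match_scalars
  · linear_combination h0
  · linear_combination h1

lemma key_vec (κ : ℝ) (hκ : κ < 0) (x w : E) (g : ℝ) (hx : 0 < 1 + κ * ‖x‖ ^ 2)
    (hw : 0 < 1 + κ * ‖w‖ ^ 2) (hgw : 0 < 1 + κ * (g ^ 2 * ‖w‖ ^ 2))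
    (hgB : 1 + κ * g * ‖w‖ ^ 2 ≠ 0) :
    ‖mAdd κ (-(mAdd κ x (g • w))) (mAdd κ x w)‖ ^ 2 =
      (1 - g) ^ 2 * ‖w‖ ^ 2 / (1 + κ * g * ‖w‖ ^ 2) ^ 2 := by
  have hgwn : ‖g • w‖ ^ 2 = g ^ 2 * ‖w‖ ^ 2 := by
    rw [norm_smul, mul_pow, Real.norm_eq_abs, sq_abs]
  have hgw' : 0 < 1 + κ * ‖g • w‖ ^ 2 := by rw [hgwn]; linarith [hgw]
  have hΔ1pos := delta_pos κ hκ x (g • w) hx hgw'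
  rw [real_inner_smul_right, hgwn] at hΔ1pos
  have hΔ2pos := delta_pos κ hκ x w hx hw
  have hPball := madd_ball κ hκ x (g • w) hx hgw'
  have hQball := madd_ball κ hκ x w hx hw
  have hPball' : 0 < 1 + κ * ‖(-(mAdd κ x (g • w)) : E)‖ ^ 2 := by rwa [norm_neg]
  have hΔopos := delta_pos κ hκ (-(mAdd κ x (g • w))) (mAdd κ x w) hPball' hQball
  rw [norm_mAdd_sq κ _ _ hΔopos.ne']
  have hPv : mAdd κ x (g • w) =
      ((1 - 2 * κ * (g * ⟪x, w⟫) + κ ^ 2 * ‖x‖ ^ 2 * (g ^ 2 * ‖w‖ ^ 2))⁻¹ *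
        (1 - 2 * κ * (g * ⟪x, w⟫) - κ * (g ^ 2 * ‖w‖ ^ 2))) • x +
      (((1 - 2 * κ * (g * ⟪x, w⟫) + κ ^ 2 * ‖x‖ ^ 2 * (g ^ 2 * ‖w‖ ^ 2))⁻¹ *
        (1 + κ * ‖x‖ ^ 2)) * g) • w := by
    rw [mAdd_eq, real_inner_smul_right, hgwn, smul_smul]
  have hQv := mAdd_eq κ x w
  rw [hPv, hQv] at hΔopos ⊢
  set Δ1 : ℝ := 1 - 2 * κ * (g * ⟪x, w⟫) + κ ^ 2 * ‖x‖ ^ 2 * (g ^ 2 * ‖w‖ ^ 2) with hΔ1def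
  set Δ2 : ℝ := 1 - 2 * κ * ⟪x, w⟫ + κ ^ 2 * ‖x‖ ^ 2 * ‖w‖ ^ 2 with hΔ2def
  set A1 : ℝ := Δ1⁻¹ * (1 - 2 * κ * (g * ⟪x, w⟫) - κ * (g ^ 2 * ‖w‖ ^ 2)) with hA1def
  set B1 : ℝ := Δ1⁻¹ * (1 + κ * ‖x‖ ^ 2) * g with hB1def
  set A2 : ℝ := Δ2⁻¹ * (1 - 2 * κ * ⟪x, w⟫ - κ * ‖w‖ ^ 2) with hA2def
  set B2 : ℝ := Δ2⁻¹ * (1 + κ * ‖x‖ ^ 2) with hB2def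
  have hneg : (-(A1 • x + B1 • w) : E) = (-A1) • x + (-B1) • w := by module
  have hsum : ((-A1) • x + (-B1) • w) + (A2 • x + B2 • w) = (A2 - A1) • x + (B2 - B1) • w := by
    module
  rw [hneg] at hΔopos ⊢
  rw [hsum]
  rw [norm_comb, inner_comb, norm_comb] at hΔopos ⊢
  rw [norm_comb]
  have hA1' : Δ1 * A1 = 1 - 2 * κ * (g * ⟪x, w⟫) - κ * (g ^ 2 * ‖w‖ ^ 2) := by
    rw [hA1def]; field_simp
  have hB1' : Δ1 * B1 = (1 + κ * ‖x‖ ^ 2) * g := by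
    rw [hB1def]; field_simp
  have hA2' : Δ2 * A2 = 1 - 2 * κ * ⟪x, w⟫ - κ * ‖w‖ ^ 2 := by
    rw [hA2def]; field_simp
  have hB2' : Δ2 * B2 = 1 + κ * ‖x‖ ^ 2 := by
    rw [hB2def]; field_simp
  rw [show (1 : ℝ) - 2 * κ * (-A1 * A2 * ‖x‖ ^ 2 + (-A1 * B2 + -B1 * A2) * ⟪x, w⟫
        + -B1 * B2 * ‖w‖ ^ 2)
      + κ ^ 2 * ((-A1) ^ 2 * ‖x‖ ^ 2 + 2 * (-A1) * (-B1) * ⟪x, w⟫ + (-B1) ^ 2 * ‖w‖ ^ 2)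
        * (A2 ^ 2 * ‖x‖ ^ 2 + 2 * A2 * B2 * ⟪x, w⟫ + B2 ^ 2 * ‖w‖ ^ 2)
      = 1 + 2 * κ * (A1 * A2 * ‖x‖ ^ 2 + (A1 * B2 + B1 * A2) * ⟪x, w⟫ + B1 * B2 * ‖w‖ ^ 2)
        + κ ^ 2 * ((A1 ^ 2 * ‖x‖ ^ 2 + 2 * A1 * B1 * ⟪x, w⟫ + B1 ^ 2 * ‖w‖ ^ 2)
          * (A2 ^ 2 * ‖x‖ ^ 2 + 2 * A2 * B2 * ⟪x, w⟫ + B2 ^ 2 * ‖w‖ ^ 2)) from by ring]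
    at hΔopos ⊢
  exact key_scalar κ (‖x‖ ^ 2) ⟪x, w⟫ (‖w‖ ^ 2) g Δ1 Δ2 A1 B1 A2 B2 _ _ _ _ _
    hΔ1def hΔ1pos.ne' hΔ2def hΔ2pos.ne' hA1' hB1' hA2' hB2' rfl rfl rfl rfl rfl
    hΔopos.ne' hgB

set_option maxHeartbeats 1000000 in
theorem dist_interpolation_to_endpoint
    (κ : ℝ) (hκ : κ < 0) (x y : E) (hx : inBall κ x) (hy : inBall κ y) (hxy : y ≠ x)
    (δ τ : ℝ) (hδ : 0 < δ) (hδτ : δ < τ) :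
    dK κ (expMap κ x ((δ / τ) • logMap κ x y)) y = (1 - δ / τ) * dK κ x y := by
  have hx' : 0 < 1 + κ * ‖x‖ ^ 2 := by
    have := show κ * ‖x‖ ^ 2 > -1 from hx; linarith
  have hy' : 0 < 1 + κ * ‖y‖ ^ 2 := by
    have := show κ * ‖y‖ ^ 2 > -1 from hy; linarith
  have hκ0 : (0:ℝ) ≤ -κ := by linarith
  have hc2 : Real.sqrt (-κ) ^ 2 = -κ := Real.sq_sqrt hκ0
  have hcpos : 0 < Real.sqrt (-κ) := Real.sqrt_pos.2 (by linarith)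
  have hxn : 0 < 1 + κ * ‖(-x : E)‖ ^ 2 := by rwa [norm_neg]
  have hΔ1pos := delta_pos κ hκ (-x) y hxn hy'
  set w : E := mAdd κ (-x) y with hwdef
  have hwball : 0 < 1 + κ * ‖w‖ ^ 2 := madd_ball κ hκ (-x) y hxn hy'
  -- ‖w‖ > 0
  have hyx : (-x + y : E) ≠ 0 := by
    intro h
    apply hxy
    have : y - x = 0 := by rw [← h]; abel
    exact sub_eq_zero.1 this
  have hwsq := norm_mAdd_sq κ (-x) y hΔ1pos.ne'
  rw [← hwdef] at hwsq
  have hw2pos : 0 < ‖w‖ ^ 2 := by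
    rw [hwsq]
    exact div_pos (pow_pos (norm_pos_iff.2 hyx) 2) hΔ1pos
  have hwpos : 0 < ‖w‖ := by
    rcases (norm_nonneg w).lt_or_eq with h | h
    · exact h
    · rw [← h] at hw2pos; simp at hw2pos
  have hwne : w ≠ 0 := norm_pos_iff.1 hwpos
  -- 0 < √(-κ)‖w‖ < 1
  have hV0 : 0 < Real.sqrt (-κ) * ‖w‖ := mul_pos hcpos hwpos
  have hV2 : (Real.sqrt (-κ) * ‖w‖) ^ 2 = -κ * ‖w‖ ^ 2 := by rw [mul_pow, hc2]
  have hV1 : Real.sqrt (-κ) * ‖w‖ < 1 := by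
    have hsq : (Real.sqrt (-κ) * ‖w‖) ^ 2 < 1 := by rw [hV2]; linarith
    have habs := abs_lt.1 ((sq_lt_one_iff_abs_lt_one (a := Real.sqrt (-κ) * ‖w‖)).1 hsq)
    linarith [habs.2]
  set A : ℝ := _root_.artanh (Real.sqrt (-κ) * ‖w‖) with hAdef
  have hApos : 0 < A := artanh_pos' hV0 hV1
  have htanhA : Real.tanh A = Real.sqrt (-κ) * ‖w‖ := by
    rw [hAdef]; exact tanh_artanh' (by linarith) hV1
  set s : ℝ := δ / τ with hsdef
  have hτ : 0 < τ := lt_trans hδ hδτ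
  have hs0 : 0 < s := div_pos hδ hτ
  have hs1 : s < 1 := (div_lt_one hτ).2 hδτ
  have hlam : lam κ x = 2 / (1 + κ * ‖x‖ ^ 2) := rfl
  have hlampos : 0 < lam κ x := by rw [hlam]; exact div_pos two_pos hx'
  -- rewrite dK κ x y
  have hdxy : dK κ x y = 2 / Real.sqrt (-κ) * A := by
    rw [dK, ← hwdef, ← hAdef]
  rw [hdxy]
  -- compute the exp-log point
  have hlog : s • logMap κ x y =
      (s * (2 / (Real.sqrt (-κ) * lam κ x) * A * ‖w‖⁻¹)) • w := by
    rw [logMap, ← hwdef, ← hAdef, smul_smul]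
  rw [hlog]
  set m : ℝ := s * (2 / (Real.sqrt (-κ) * lam κ x) * A * ‖w‖⁻¹) with hmdef
  have hmpos : 0 < m := by
    rw [hmdef]
    exact mul_pos hs0 (mul_pos (mul_pos
      (div_pos two_pos (mul_pos hcpos hlampos)) hApos) (inv_pos.2 hwpos))
  have hvne : m • w ≠ 0 := smul_ne_zero hmpos.ne' hwne
  rw [expMap, if_neg hvne]
  have hnorm_mw : ‖m • w‖ = m * ‖w‖ := by
    rw [norm_smul, Real.norm_eq_abs, abs_of_pos hmpos]
  have harg : Real.sqrt (-κ) * lam κ x * ‖m • w‖ / 2 = s * A := by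
    rw [hnorm_mw, hmdef, hlam]
    field_simp
  set t : ℝ := Real.tanh (s * A) with htdef
  have hcoef : (Real.tanh (Real.sqrt (-κ) * lam κ x * ‖m • w‖ / 2) /
      (Real.sqrt (-κ) * ‖m • w‖)) • (m • w) = (t / (Real.sqrt (-κ) * ‖w‖)) • w := by
    rw [harg, hnorm_mw, smul_smul, ← htdef]
    congr 1
    field_simp
  rw [hcoef]
  set g : ℝ := t / (Real.sqrt (-κ) * ‖w‖) with hgdef
  -- facts about t and g
  have ht0 : 0 < t := by rw [htdef]; exact tanh_pos' (mul_pos hs0 hApos)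
  have htV : t < Real.sqrt (-κ) * ‖w‖ := by
    rw [htdef, ← htanhA]
    exact tanh_strictMono' (lt_of_lt_of_eq (mul_lt_mul_of_pos_right hs1 hApos) (one_mul A))
  have ht1 : t < 1 := lt_trans htV hV1
  have hgcw : g * (Real.sqrt (-κ) * ‖w‖) = t := by
    rw [hgdef]; field_simp
  have htV1 : t * (Real.sqrt (-κ) * ‖w‖) < 1 :=
    lt_trans (mul_lt_of_lt_one_left hV0 ht1) hV1
  have e2 : κ * (g ^ 2 * ‖w‖ ^ 2) = -t ^ 2 := by
    have e : g ^ 2 * ‖w‖ ^ 2 * (Real.sqrt (-κ)) ^ 2 = t ^ 2 := by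
      linear_combination (g * (Real.sqrt (-κ) * ‖w‖) + t) * hgcw
    linear_combination (-1 : ℝ) * e + g ^ 2 * ‖w‖ ^ 2 * hc2
  have hgw2 : 0 < 1 + κ * (g ^ 2 * ‖w‖ ^ 2) := by
    have h1 : 1 + κ * (g ^ 2 * ‖w‖ ^ 2) = 1 - t ^ 2 := by linear_combination e2
    have h2 : t ^ 2 < 1 := by
      have := pow_lt_one₀ (le_of_lt ht0) ht1 (two_ne_zero)
      simpa using this
    rw [h1]; linarith
  have e3 : κ * g * ‖w‖ ^ 2 = -(t * (Real.sqrt (-κ) * ‖w‖)) := by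
    linear_combination (-(Real.sqrt (-κ) * ‖w‖)) * hgcw + (g * ‖w‖ ^ 2) * hc2
  have hgBpos : 0 < 1 + κ * g * ‖w‖ ^ 2 := by
    have : 1 + κ * g * ‖w‖ ^ 2 = 1 - t * (Real.sqrt (-κ) * ‖w‖) := by linear_combination e3
    rw [this]; linarith
  -- replace y by mAdd κ x w
  have hy_eq : y = mAdd κ x w := by
    rw [hwdef]; exact (left_cancel κ hκ x y hx' hy').symm
  rw [hy_eq, dK]
  set N : ℝ := ‖mAdd κ (-(mAdd κ x (g • w))) (mAdd κ x w)‖ with hNdef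
  have hkey := key_vec κ hκ x w g hx' hwball hgw2 hgBpos.ne'
  rw [← hNdef] at hkey
  have hden : 1 + κ * g * ‖w‖ ^ 2 = 1 - t * (Real.sqrt (-κ) * ‖w‖) := by
    linear_combination e3
  have hnum : Real.sqrt (-κ) ^ 2 * ((1 - g) ^ 2 * ‖w‖ ^ 2)
      = (Real.sqrt (-κ) * ‖w‖ - t) ^ 2 := by
    rw [hgdef]
    field_simp
  have hcN : Real.sqrt (-κ) * N
      = (Real.sqrt (-κ) * ‖w‖ - t) / (1 - t * (Real.sqrt (-κ) * ‖w‖)) := by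
    have h1 : (Real.sqrt (-κ) * N) ^ 2
        = ((Real.sqrt (-κ) * ‖w‖ - t) / (1 - t * (Real.sqrt (-κ) * ‖w‖))) ^ 2 := by
      rw [mul_pow, hkey, hden]
      rw [div_pow]
      rw [show Real.sqrt (-κ) ^ 2 * ((1 - g) ^ 2 * ‖w‖ ^ 2 / (1 - t * (Real.sqrt (-κ) * ‖w‖)) ^ 2)
          = Real.sqrt (-κ) ^ 2 * ((1 - g) ^ 2 * ‖w‖ ^ 2) / (1 - t * (Real.sqrt (-κ) * ‖w‖)) ^ 2
          from by ring, hnum]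
    have hXnn : 0 ≤ (Real.sqrt (-κ) * ‖w‖ - t) / (1 - t * (Real.sqrt (-κ) * ‖w‖)) :=
      div_nonneg (by linarith) (by linarith)
    have hcNnn : 0 ≤ Real.sqrt (-κ) * N := mul_nonneg hcpos.le (hNdef ▸ norm_nonneg _)
    calc Real.sqrt (-κ) * N = Real.sqrt ((Real.sqrt (-κ) * N) ^ 2) :=
          (Real.sqrt_sq hcNnn).symm
      _ = Real.sqrt (((Real.sqrt (-κ) * ‖w‖ - t) / (1 - t * (Real.sqrt (-κ) * ‖w‖))) ^ 2) := by
          rw [h1]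
      _ = (Real.sqrt (-κ) * ‖w‖ - t) / (1 - t * (Real.sqrt (-κ) * ‖w‖)) :=
          Real.sqrt_sq hXnn
  rw [hcN]
  have hXtanh : (Real.sqrt (-κ) * ‖w‖ - t) / (1 - t * (Real.sqrt (-κ) * ‖w‖))
      = Real.tanh (A - s * A) := by
    rw [tanh_sub', htanhA, ← htdef]
    ring
  rw [hXtanh, artanh_tanh']
  ring
end

section
/- Let κ < 0, let x be a point of the Poincaré ball of curvature κ, and let v be any vector. Then exp^κ_x(v) is again in the Poincaré ball of curvature κ, i.e. κ·‖exp^κ_x(v)‖² > −1. -/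
open Real Filter

open scoped RealInnerProductSpace

variable {E : Type*} [NormedAddCommGroup E] [InnerProductSpace ℝ E]

lemma abs_tanh_lt_one (u : ℝ) : |Real.tanh u| < 1 := by
  have h1 := Real.cosh_sq_sub_sinh_sq u
  have h2 := Real.cosh_pos u
  rw [Real.tanh_eq_sinh_div_cosh, abs_div, abs_of_pos h2, div_lt_one h2, abs_lt]
  constructor <;> nlinarith

lemma mAdd_mem_ball (κ : ℝ) (hκ : κ < 0) (x y : E) (hx : inBall κ x) (hy : inBall κ y) :
    inBall κ (mAdd κ x y) := by
  simp only [inBall] at hx hy ⊢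
  set t := ⟪x, y⟫ with ht
  set p := ‖x‖ ^ 2 with hp
  set q := ‖y‖ ^ 2 with hq
  set D := 1 - 2 * κ * t + κ ^ 2 * p * q with hD
  set a := 1 - 2 * κ * t - κ * q with ha
  set b := 1 + κ * p with hb
  set N := a ^ 2 * p + 2 * (a * b) * t + b ^ 2 * q with hN
  have hxy : |t| ≤ ‖x‖ * ‖y‖ := abs_real_inner_le_norm x y
  have hx' : -κ * p < 1 := by linarith
  have hy' : -κ * q < 1 := by linarith
  have hu : 0 ≤ -κ * p := mul_nonneg (by linarith) (hp ▸ sq_nonneg _)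
  have hw : 0 ≤ -κ * q := mul_nonneg (by linarith) (hq ▸ sq_nonneg _)
  have hsq : (κ * (‖x‖ * ‖y‖)) ^ 2 < 1 := by
    have heq : (κ * (‖x‖ * ‖y‖)) ^ 2 = (-κ * p) * (-κ * q) := by
      simp only [hp, hq]; ring
    rw [heq]
    nlinarith
  have hnn : (0:ℝ) ≤ ‖x‖ * ‖y‖ := by positivity
  have h1 : 0 < 1 + κ * (‖x‖ * ‖y‖) := by nlinarith
  have hDpos : 0 < D := by
    have habs : -(‖x‖ * ‖y‖) ≤ t := neg_le_of_abs_le hxy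
    have h2 : κ ^ 2 * p * q = (κ * (‖x‖ * ‖y‖)) ^ 2 := by simp only [hp, hq]; ring
    have h3 : D ≥ (1 + κ * (‖x‖ * ‖y‖)) ^ 2 := by
      simp only [hD, h2]
      nlinarith [neg_pos.mpr hκ]
    nlinarith
  have hDne : D ≠ 0 := ne_of_gt hDpos
  have hnorm : ‖mAdd κ x y‖ ^ 2 = D⁻¹ ^ 2 * N := by
    have hm : mAdd κ x y = D⁻¹ • (a • x + b • y) := rfl
    rw [hm, norm_smul, mul_pow, Real.norm_eq_abs, sq_abs]
    congr 1
    have hyx : ⟪y, x⟫ = t := by rw [real_inner_comm]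
    rw [← real_inner_self_eq_norm_sq]
    simp only [inner_add_left, inner_add_right, real_inner_smul_left, real_inner_smul_right,
      real_inner_self_eq_norm_sq, real_inner_comm y x, norm_smul, Real.norm_eq_abs,
      mul_pow, sq_abs]
    simp only [hyx, ← ht, ← hp, ← hq, hN]; ring
  have hkey : D ^ 2 + κ * N = b * (1 + κ * q) * D := by
    simp only [hN, hD, ha, hb]; ring
  have hb' : 0 < b := by simp only [hb]; linarith
  have hq' : 0 < 1 + κ * q := by linarith
  have hfin : κ * ‖mAdd κ x y‖ ^ 2 + 1 = b * (1 + κ * q) / D := by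
    rw [hnorm]
    field_simp
    linear_combination D * hkey
  have hpos : 0 < b * (1 + κ * q) / D := div_pos (mul_pos hb' hq') hDpos
  linarith [hfin, hpos]

theorem expMap_mem_ball
    (κ : ℝ) (hκ : κ < 0) (x : E) (hx : inBall κ x) (v : E) :
    inBall κ (expMap κ x v) := by
  rw [expMap]
  split_ifs with hv
  · exact hx
  · apply mAdd_mem_ball κ hκ x _ hx
    have hcpos : 0 < Real.sqrt (-κ) := Real.sqrt_pos.mpr (by linarith)
    have hc2 : Real.sqrt (-κ) ^ 2 = -κ := Real.sq_sqrt (by linarith)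
    have hvn : (0:ℝ) < ‖v‖ := norm_pos_iff.mpr hv
    set s := Real.tanh (Real.sqrt (-κ) * lam κ x * ‖v‖ / 2) with hs
    have hnorm : ‖(s / (Real.sqrt (-κ) * ‖v‖)) • v‖ = |s| / Real.sqrt (-κ) := by
      rw [norm_smul, Real.norm_eq_abs, abs_div, abs_mul, abs_of_pos hcpos,
        abs_of_pos hvn]
      field_simp
    simp only [inBall, hnorm]
    have hts : |s| < 1 := _root_.abs_tanh_lt_one _
    have heq : κ * (|s| / Real.sqrt (-κ)) ^ 2 = -(|s| ^ 2) := by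
      rw [div_pow, hc2, sq_abs]
      field_simp
      rw [mul_div_cancel_left₀ _ (show κ ≠ 0 by linarith)]
    rw [heq]
    nlinarith [abs_nonneg s]
end
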